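/- Let T, n ≥ 1, let R be a real symmetric T×T matrix and c, C > 0 constants with c‖x‖² ≤ xᵀRx ≤ C‖x‖² for all x ∈ ℝ^T. For each i ∈ {1,…,n} let D_i be a diagonal T×T matrix all of whose diagonal entries are at least d, where d > 0, and let v_i ∈ ℝ^T. Set M = (1/n)∑_{i=1}^n D_i R D_i + (1/n)∑_{i=1}^n v_i v_iᵀ. Then M is invertible, the matrix M⁻¹ R M⁻¹ is symmetric positive semidefinite and satisfies xᵀM⁻¹RM⁻¹x ≤ (C/(c²d⁴))·‖x‖² for all x ∈ ℝ^T, and moreover M·(M⁻²R)·M⁻¹ = M⁻¹RM⁻¹, so M⁻²R and M⁻¹RM⁻¹ have the same characteristic polynomial; in particular every eigenvalue of M⁻²R is real, nonnegative, and at most C/(c²d⁴). -/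

import Mathlib

open Matrix BigOperators Polynomial

lemma my_sum_mulVec {T N : ℕ} (A : Fin N → Matrix (Fin T) (Fin T) ℝ) (x : Fin T → ℝ) :
    (∑ i, A i) *ᵥ x = ∑ i, (A i *ᵥ x) := by
  funext t
  simp [mulVec, dotProduct, Matrix.sum_apply, Finset.sum_mul]
  rw [Finset.sum_comm]

lemma my_dot_sum {T N : ℕ} (x : Fin T → ℝ) (y : Fin N → (Fin T → ℝ)) :
    x ⬝ᵥ (∑ i, y i) = ∑ i, x ⬝ᵥ y i := by
  simp [dotProduct, Finset.mul_sum, Finset.sum_apply]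
  rw [Finset.sum_comm]

lemma my_dot_self_nonneg {T : ℕ} (x : Fin T → ℝ) : 0 ≤ x ⬝ᵥ x :=
  Finset.sum_nonneg fun i _ => mul_self_nonneg (x i)

lemma my_symm_dot {T : ℕ} (A : Matrix (Fin T) (Fin T) ℝ) (hA : Aᵀ = A) (x y : Fin T → ℝ) :
    x ⬝ᵥ (A *ᵥ y) = (A *ᵥ x) ⬝ᵥ y := by
  rw [dotProduct_mulVec]
  congr 1
  rw [← vecMul_transpose, hA]

/-- Similar matrices have equal characteristic polynomials. -/
lemma my_charpoly_conj {T : ℕ} (P A : Matrix (Fin T) (Fin T) ℝ) (hP : IsUnit P.det) :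
    (P⁻¹ * A * P).charpoly = A.charpoly := by
  have h1 : charmatrix (P⁻¹ * A * P)
      = (C : ℝ →+* ℝ[X]).mapMatrix P⁻¹ * charmatrix A * (C : ℝ →+* ℝ[X]).mapMatrix P := by
    unfold charmatrix
    rw [mul_sub, sub_mul]
    congr 1
    · rw [← (Matrix.scalar_commute (X : ℝ[X]) (fun r' => Commute.all _ _)
        ((C : ℝ →+* ℝ[X]).mapMatrix P⁻¹)).eq, mul_assoc,
        ← _root_.map_mul, Matrix.nonsing_inv_mul P hP, _root_.map_one, mul_one]
    · rw [← _root_.map_mul, ← _root_.map_mul]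
  have h2 : ((C : ℝ →+* ℝ[X]).mapMatrix P⁻¹).det * ((C : ℝ →+* ℝ[X]).mapMatrix P).det = 1 := by
    rw [← det_mul, ← _root_.map_mul, Matrix.nonsing_inv_mul P hP, _root_.map_one, det_one]
  rw [Matrix.charpoly, Matrix.charpoly, h1, det_mul, det_mul]
  calc ((C : ℝ →+* ℝ[X]).mapMatrix P⁻¹).det * (charmatrix A).det
        * ((C : ℝ →+* ℝ[X]).mapMatrix P).det
      = ((C : ℝ →+* ℝ[X]).mapMatrix P⁻¹).det * ((C : ℝ →+* ℝ[X]).mapMatrix P).det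
        * (charmatrix A).det := by ring
    _ = (charmatrix A).det := by rw [h2, one_mul]

lemma my_cast_dot {T : ℕ} (a b : Fin T → ℝ) :
    (fun i => ((a i : ℝ) : ℂ)) ⬝ᵥ (fun i => ((b i : ℝ) : ℂ)) = ((a ⬝ᵥ b : ℝ) : ℂ) := by
  simp [dotProduct]

lemma my_map_mulVec_cast {T : ℕ} (S : Matrix (Fin T) (Fin T) ℝ) (a : Fin T → ℝ) :
    (S.map (algebraMap ℝ ℂ)) *ᵥ (fun i => ((a i : ℝ) : ℂ)) = fun i => (((S *ᵥ a) i : ℝ) : ℂ) := by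
  funext i
  simp [mulVec, dotProduct, Matrix.map_apply]

/-- With `c‖x‖² ≤ xᵀRx ≤ C‖x‖²`, diagonal `D i` with entries `≥ d > 0`, and
`M = (1/n)∑ Dᵢ R Dᵢ + (1/n)∑ vᵢ vᵢᵀ`, the matrix `M` is invertible, `M⁻¹RM⁻¹` is symmetric
positive semidefinite with `xᵀM⁻¹RM⁻¹x ≤ (C/(c²d⁴))‖x‖²`, `M(M⁻²R)M⁻¹ = M⁻¹RM⁻¹` so that
`M⁻²R` and `M⁻¹RM⁻¹` have the same characteristic polynomial, and every eigenvalue of `M⁻²R`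
is real, nonnegative and at most `C/(c²d⁴)`. -/
theorem stmt1 (T n : ℕ) (hT : 1 ≤ T) (hn : 1 ≤ n)
    (R : Matrix (Fin T) (Fin T) ℝ) (hRsym : R.IsSymm)
    (c C : ℝ) (hc : 0 < c) (hC : 0 < C)
    (hRlb : ∀ x : Fin T → ℝ, c * (x ⬝ᵥ x) ≤ x ⬝ᵥ (R *ᵥ x))
    (hRub : ∀ x : Fin T → ℝ, x ⬝ᵥ (R *ᵥ x) ≤ C * (x ⬝ᵥ x))
    (d : ℝ) (hd : 0 < d)
    (D : Fin n → Matrix (Fin T) (Fin T) ℝ)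
    (hDdiag : ∀ i, (D i).IsDiag)
    (hDge : ∀ i t, d ≤ D i t t)
    (v : Fin n → (Fin T → ℝ))
    (M : Matrix (Fin T) (Fin T) ℝ)
    (hM : M = (1 / (n : ℝ)) • ∑ i, D i * R * D i
        + (1 / (n : ℝ)) • ∑ i, vecMulVec (v i) (v i)) :
    IsUnit M ∧
    (M⁻¹ * R * M⁻¹).IsSymm ∧
    (M⁻¹ * R * M⁻¹).PosSemidef ∧
    (∀ x : Fin T → ℝ, x ⬝ᵥ ((M⁻¹ * R * M⁻¹) *ᵥ x) ≤ (C / (c ^ 2 * d ^ 4)) * (x ⬝ᵥ x)) ∧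
    M * (M⁻¹ * M⁻¹ * R) * M⁻¹ = M⁻¹ * R * M⁻¹ ∧
    (M⁻¹ * M⁻¹ * R).charpoly = (M⁻¹ * R * M⁻¹).charpoly ∧
    (∀ z : ℂ, ((M⁻¹ * M⁻¹ * R).charpoly.map (algebraMap ℝ ℂ)).IsRoot z →
      z.im = 0 ∧ 0 ≤ z.re ∧ z.re ≤ C / (c ^ 2 * d ^ 4)) := by
  have hnR : (0:ℝ) < (n:ℝ) := by exact_mod_cast hn
  -- quadratic form lower bound for M
  have hMq : ∀ x : Fin T → ℝ, (c * d ^ 2) * (x ⬝ᵥ x) ≤ x ⬝ᵥ (M *ᵥ x) := by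
    intro x
    have hDx : ∀ i, D i *ᵥ x = fun t => D i t t * x t := by
      intro i
      conv_lhs => rw [← (hDdiag i).diagonal_diag]
      funext t
      rw [mulVec_diagonal]
      rfl
    have hterm : ∀ i : Fin n, (c * d ^ 2) * (x ⬝ᵥ x) ≤ x ⬝ᵥ ((D i * R * D i) *ᵥ x) := by
      intro i
      have hsym : (D i)ᵀ = D i := (hDdiag i).isSymm
      have e1 : x ⬝ᵥ ((D i * R * D i) *ᵥ x)
          = (D i *ᵥ x) ⬝ᵥ (R *ᵥ (D i *ᵥ x)) := by
        rw [← mulVec_mulVec, ← mulVec_mulVec, my_symm_dot (D i) hsym]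
      have e2 : c * ((D i *ᵥ x) ⬝ᵥ (D i *ᵥ x)) ≤ (D i *ᵥ x) ⬝ᵥ (R *ᵥ (D i *ᵥ x)) :=
        hRlb _
      have e3 : d ^ 2 * (x ⬝ᵥ x) ≤ (D i *ᵥ x) ⬝ᵥ (D i *ᵥ x) := by
        rw [hDx i]
        simp only [dotProduct, Finset.mul_sum]
        apply Finset.sum_le_sum
        intro t _
        have h1 : d ≤ D i t t := hDge i t
        nlinarith [mul_nonneg (mul_nonneg (sub_nonneg.2 h1)
          (show (0:ℝ) ≤ D i t t + d by linarith)) (mul_self_nonneg (x t))]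
      calc (c * d ^ 2) * (x ⬝ᵥ x) = c * (d ^ 2 * (x ⬝ᵥ x)) := by ring
        _ ≤ c * ((D i *ᵥ x) ⬝ᵥ (D i *ᵥ x)) := mul_le_mul_of_nonneg_left e3 hc.le
        _ ≤ (D i *ᵥ x) ⬝ᵥ (R *ᵥ (D i *ᵥ x)) := e2
        _ = x ⬝ᵥ ((D i * R * D i) *ᵥ x) := e1.symm
    have hterm2 : ∀ i : Fin n, 0 ≤ x ⬝ᵥ ((vecMulVec (v i) (v i)) *ᵥ x) := by
      intro i
      have h : vecMulVec (v i) (v i) *ᵥ x = (v i ⬝ᵥ x) • (v i) := by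
        funext t
        simp [vecMulVec, mulVec, dotProduct, Finset.mul_sum, mul_assoc, mul_comm, mul_left_comm]
      rw [h, dotProduct_smul, smul_eq_mul, dotProduct_comm]
      exact mul_self_nonneg _
    rw [hM, add_mulVec, dotProduct_add, smul_mulVec, smul_mulVec,
      dotProduct_smul, dotProduct_smul, my_sum_mulVec, my_sum_mulVec, my_dot_sum, my_dot_sum]
    have hs1 : (n:ℝ) * ((c * d ^ 2) * (x ⬝ᵥ x)) ≤ ∑ i, x ⬝ᵥ ((D i * R * D i) *ᵥ x) := by
      calc (n:ℝ) * ((c * d ^ 2) * (x ⬝ᵥ x)) = ∑ _i : Fin n, (c * d ^ 2) * (x ⬝ᵥ x) := by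
            rw [Finset.sum_const, Finset.card_univ, Fintype.card_fin, nsmul_eq_mul]
        _ ≤ _ := Finset.sum_le_sum fun i _ => hterm i
    have hs2 : (0:ℝ) ≤ ∑ i, x ⬝ᵥ ((vecMulVec (v i) (v i)) *ᵥ x) :=
      Finset.sum_nonneg fun i _ => hterm2 i
    have h1n : (0:ℝ) ≤ 1 / (n:ℝ) := by positivity
    calc (c * d ^ 2) * (x ⬝ᵥ x)
        = (1/(n:ℝ)) * ((n:ℝ) * ((c * d ^ 2) * (x ⬝ᵥ x))) + 0 := by field_simp; ring
      _ ≤ (1/(n:ℝ)) • (∑ i, x ⬝ᵥ ((D i * R * D i) *ᵥ x))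
          + (1/(n:ℝ)) • (∑ i, x ⬝ᵥ ((vecMulVec (v i) (v i)) *ᵥ x)) := by
          refine add_le_add ?_ ?_
          · exact mul_le_mul_of_nonneg_left hs1 h1n
          · simpa using mul_nonneg h1n hs2
  -- M symmetric
  have hMsym : Mᵀ = M := by
    rw [hM]
    rw [transpose_add, transpose_smul, transpose_smul]
    congr 1
    · congr 1
      rw [transpose_sum]
      refine Finset.sum_congr rfl fun i _ => ?_
      rw [transpose_mul, transpose_mul, (hDdiag i).isSymm, hRsym.eq, mul_assoc]
    · congr 1
      rw [transpose_sum]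
      refine Finset.sum_congr rfl fun i _ => ?_
      ext s t
      simp [vecMulVec, transpose_apply, mul_comm]
  have hx0 : ∀ x : Fin T → ℝ, x ≠ 0 → 0 < x ⬝ᵥ x := by
    intro x hx
    rcases lt_or_eq_of_le (my_dot_self_nonneg x) with h | h
    · exact h
    · exact absurd (dotProduct_self_eq_zero.mp h.symm) hx
  -- M invertible
  have hdet : IsUnit M.det := by
    rw [isUnit_iff_ne_zero]
    intro h0
    obtain ⟨x, hx, hMx⟩ := Matrix.exists_mulVec_eq_zero_iff.mpr h0
    have := hMq x
    rw [hMx] at this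
    simp only [dotProduct_zero] at this
    nlinarith [hx0 x hx, mul_pos (mul_pos hc (pow_pos hd 2)) (hx0 x hx)]
  have hMinvsym : M⁻¹ᵀ = M⁻¹ := by rw [transpose_nonsing_inv, hMsym]
  -- the key quadratic identity for S := M⁻¹ R M⁻¹
  have hSform : ∀ x : Fin T → ℝ,
      x ⬝ᵥ ((M⁻¹ * R * M⁻¹) *ᵥ x) = (M⁻¹ *ᵥ x) ⬝ᵥ (R *ᵥ (M⁻¹ *ᵥ x)) := by
    intro x
    rw [← mulVec_mulVec, ← mulVec_mulVec, my_symm_dot M⁻¹ hMinvsym]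
  -- norm bound on M⁻¹ x
  have hMinvq : ∀ x : Fin T → ℝ,
      (c^2 * d^4) * ((M⁻¹ *ᵥ x) ⬝ᵥ (M⁻¹ *ᵥ x)) ≤ x ⬝ᵥ x := by
    intro x
    set y := M⁻¹ *ᵥ x with hy
    have hMy : M *ᵥ y = x := by
      rw [hy, mulVec_mulVec, Matrix.mul_nonsing_inv M hdet, one_mulVec]
    have h1 : (c * d ^ 2) * (y ⬝ᵥ y) ≤ y ⬝ᵥ x := by
      have := hMq y; rwa [hMy] at this
    have h2 : (y ⬝ᵥ x) ^ 2 ≤ (y ⬝ᵥ y) * (x ⬝ᵥ x) := by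
      have := Finset.sum_mul_sq_le_sq_mul_sq Finset.univ y x
      simpa [dotProduct, sq] using this
    have hyy : 0 ≤ y ⬝ᵥ y := my_dot_self_nonneg y
    have hxx : 0 ≤ x ⬝ᵥ x := my_dot_self_nonneg x
    rcases eq_or_lt_of_le hyy with h | h
    · rw [← h]; simpa using hxx
    · nlinarith [sq_nonneg (y ⬝ᵥ x), mul_pos (mul_pos hc (pow_pos hd 2)) h]
  -- upper bound for quadratic form of S
  have hSub : ∀ x : Fin T → ℝ,
      x ⬝ᵥ ((M⁻¹ * R * M⁻¹) *ᵥ x) ≤ (C / (c ^ 2 * d ^ 4)) * (x ⬝ᵥ x) := by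
    intro x
    rw [hSform x]
    set y := M⁻¹ *ᵥ x with hy
    have h1 : y ⬝ᵥ (R *ᵥ y) ≤ C * (y ⬝ᵥ y) := hRub y
    have h2 := hMinvq x
    have hcd : 0 < c ^ 2 * d ^ 4 := by positivity
    calc y ⬝ᵥ (R *ᵥ y) ≤ C * (y ⬝ᵥ y) := h1
      _ ≤ C * ((x ⬝ᵥ x) / (c^2 * d^4)) := by
          apply mul_le_mul_of_nonneg_left _ hC.le
          rw [le_div_iff₀ hcd]
          linarith [h2]
      _ = (C / (c ^ 2 * d ^ 4)) * (x ⬝ᵥ x) := by ring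
  -- lower (psd) bound
  have hSlb : ∀ x : Fin T → ℝ, 0 ≤ x ⬝ᵥ ((M⁻¹ * R * M⁻¹) *ᵥ x) := by
    intro x
    rw [hSform x]
    have h1 := hRlb (M⁻¹ *ᵥ x)
    nlinarith [my_dot_self_nonneg (M⁻¹ *ᵥ x)]
  -- symmetry of S
  have hSsym : (M⁻¹ * R * M⁻¹).IsSymm := by
    unfold Matrix.IsSymm
    rw [transpose_mul, transpose_mul, hMinvsym, hRsym.eq, mul_assoc]
  have hunit : IsUnit M := (Matrix.isUnit_iff_isUnit_det M).mpr hdet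
  -- part (v)
  have hv : M * (M⁻¹ * M⁻¹ * R) * M⁻¹ = M⁻¹ * R * M⁻¹ := by
    rw [← mul_assoc, ← mul_assoc, Matrix.mul_nonsing_inv M hdet, one_mul, mul_assoc]
  -- part (vi)
  have hconj : M⁻¹ * M⁻¹ * R = M⁻¹ * (M⁻¹ * R * M⁻¹) * M := by
    simp only [Matrix.mul_assoc, Matrix.nonsing_inv_mul M hdet, Matrix.mul_one]
  have hcp : (M⁻¹ * M⁻¹ * R).charpoly = (M⁻¹ * R * M⁻¹).charpoly := by
    rw [hconj]
    exact my_charpoly_conj M (M⁻¹ * R * M⁻¹) hdet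
  refine ⟨hunit, hSsym, ?_, hSub, hv, hcp, ?_⟩
  · -- PosSemidef
    refine .of_dotProduct_mulVec_nonneg (by rw [IsHermitian, conjTranspose_eq_transpose_of_trivial]; exact hSsym) fun x => ?_
    have := hSlb x
    simpa [star_trivial] using this
  · -- eigenvalue bounds
    intro z hz
    rw [hcp, ← Matrix.charpoly_map] at hz
    set S := M⁻¹ * R * M⁻¹ with hSdef
    set Sc := S.map (algebraMap ℝ ℂ) with hScdef
    -- from root to eigenvector
    have hdet0 : (Matrix.scalar (Fin T) z - Sc).det = 0 := by
      have h1 : (Sc.charpoly).eval z = 0 := hz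
      rw [Matrix.charpoly, _root_.eval_det, matPolyEquiv_charmatrix] at h1
      simpa using h1
    obtain ⟨w, hw0, hww⟩ := Matrix.exists_mulVec_eq_zero_iff.mpr hdet0
    have heig : Sc *ᵥ w = z • w := by
      have h1 : (Matrix.scalar (Fin T) z) *ᵥ w - Sc *ᵥ w = 0 := by
        rw [← sub_mulVec]; exact hww
      have h2 : (Matrix.scalar (Fin T) z) *ᵥ w = z • w := by
        funext i; simp [Matrix.scalar, mulVec_diagonal, Pi.algebraMap_apply]
      rw [h2] at h1
      linear_combination (norm := module) -h1
    -- decompose w into real and imaginary parts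
    set a : Fin T → ℝ := fun i => (w i).re with ha
    set b : Fin T → ℝ := fun i => (w i).im with hb
    have hwdec : w = (fun i => ((a i : ℝ) : ℂ)) + Complex.I • (fun i => ((b i : ℝ) : ℂ)) := by
      funext i
      simp only [Pi.add_apply, Pi.smul_apply, smul_eq_mul, ha, hb]
      rw [mul_comm]
      exact (Complex.re_add_im (w i)).symm
    have hstarw : star w
        = (fun i => ((a i : ℝ) : ℂ)) - Complex.I • (fun i => ((b i : ℝ) : ℂ)) := by
      funext i
      simp only [Pi.star_apply, Pi.sub_apply, Pi.smul_apply, smul_eq_mul, ha, hb]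
      apply Complex.ext <;> simp
    -- quadratic form values
    have hq : star w ⬝ᵥ (Sc *ᵥ w) = ((a ⬝ᵥ (S *ᵥ a) + b ⬝ᵥ (S *ᵥ b) : ℝ) : ℂ) := by
      have hsymm : a ⬝ᵥ (S *ᵥ b) = b ⬝ᵥ (S *ᵥ a) := by
        rw [my_symm_dot S hSsym.eq, dotProduct_comm]
      conv_lhs => rw [hstarw, hwdec]
      rw [mulVec_add, mulVec_smul, my_map_mulVec_cast, my_map_mulVec_cast,
        dotProduct_add, sub_dotProduct, sub_dotProduct, dotProduct_smul,
        smul_dotProduct, smul_dotProduct, dotProduct_smul,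
        my_cast_dot, my_cast_dot, my_cast_dot, my_cast_dot, hsymm]
      simp only [smul_eq_mul]
      push_cast
      ring_nf
      rw [Complex.I_sq]
      ring
    -- star w ⬝ᵥ w
    have hp : star w ⬝ᵥ w = ((a ⬝ᵥ a + b ⬝ᵥ b : ℝ) : ℂ) := by
      conv_lhs => rw [hstarw, hwdec]
      rw [dotProduct_add, sub_dotProduct, sub_dotProduct, dotProduct_smul, smul_dotProduct,
        smul_dotProduct, dotProduct_smul, my_cast_dot, my_cast_dot, my_cast_dot, my_cast_dot]
      have hab : a ⬝ᵥ b = b ⬝ᵥ a := dotProduct_comm a b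
      rw [hab]
      simp only [smul_eq_mul]
      push_cast
      ring_nf
      rw [Complex.I_sq]
      ring
    have hqz : star w ⬝ᵥ (Sc *ᵥ w) = z * (star w ⬝ᵥ w) := by
      rw [heig, dotProduct_smul, smul_eq_mul]
    have hppos : 0 < a ⬝ᵥ a + b ⬝ᵥ b := by
      rcases lt_or_eq_of_le (add_nonneg (my_dot_self_nonneg a) (my_dot_self_nonneg b))
        with h | h
      · exact h
      · exfalso
        apply hw0
        have h' := h.symm
        have haa : a ⬝ᵥ a = 0 := by nlinarith [my_dot_self_nonneg a, my_dot_self_nonneg b]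
        have hbb : b ⬝ᵥ b = 0 := by nlinarith [my_dot_self_nonneg a, my_dot_self_nonneg b]
        have ha0 : a = 0 := dotProduct_self_eq_zero.mp haa
        have hb0 : b = 0 := dotProduct_self_eq_zero.mp hbb
        funext i
        apply Complex.ext
        · simpa using congrFun ha0 i
        · simpa using congrFun hb0 i
    -- combine
    have hkey : ((a ⬝ᵥ (S *ᵥ a) + b ⬝ᵥ (S *ᵥ b) : ℝ) : ℂ)
        = z * ((a ⬝ᵥ a + b ⬝ᵥ b : ℝ) : ℂ) := by rw [← hq, ← hp, hqz]
    have him : z.im = 0 := by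
      have := congrArg Complex.im hkey
      simp [Complex.mul_im] at this
      rcases this with h | h
      · exact h
      · exact absurd h hppos.ne'
    have hre : z.re * (a ⬝ᵥ a + b ⬝ᵥ b) = a ⬝ᵥ (S *ᵥ a) + b ⬝ᵥ (S *ᵥ b) := by
      have := congrArg Complex.re hkey
      simp [Complex.mul_re, him] at this
      linarith [this]
    have hq0 : 0 ≤ a ⬝ᵥ (S *ᵥ a) + b ⬝ᵥ (S *ᵥ b) := add_nonneg (hSlb a) (hSlb b)
    have hqK : a ⬝ᵥ (S *ᵥ a) + b ⬝ᵥ (S *ᵥ b)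
        ≤ (C / (c ^ 2 * d ^ 4)) * (a ⬝ᵥ a + b ⬝ᵥ b) := by
      have := hSub a
      have := hSub b
      have h := add_le_add (hSub a) (hSub b)
      linarith [h]
    refine ⟨him, ?_, ?_⟩
    · have h1 : 0 ≤ z.re * (a ⬝ᵥ a + b ⬝ᵥ b) := by rw [hre]; exact hq0
      have h2 := div_nonneg h1 hppos.le
      rwa [mul_div_cancel_right₀ _ hppos.ne'] at h2
    · have h1 : z.re * (a ⬝ᵥ a + b ⬝ᵥ b)
          ≤ (C / (c ^ 2 * d ^ 4)) * (a ⬝ᵥ a + b ⬝ᵥ b) := by rw [hre]; exact hqK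
      exact le_of_mul_le_mul_right h1 hppos
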